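/- The H-orbits on X = (ℂⁿ∖{0})/ℝ^× are exactly the n sets Y_{2j−1} := {[z] : z_{j+1}=⋯=z_n=0, z_j ≠ 0} for j ∈ {1,...,n}; in particular the number of H-orbits on X is exactly n, hence finite. -/

import Mathlib

noncomputable section
open Complex

abbrev Reps : Type := ℂ × ℂ

def act (x : Reps) (z : ℂ) : ℂ := x.1 * z + x.2 * (starRingEnd ℂ) z

def Mact {n : ℕ} (A : Matrix (Fin n) (Fin n) Reps) (v : Fin n → ℂ) : Fin n → ℂ :=
  fun i => ∑ k : Fin n, act (A i k) (v k)

def epsPow (a : ℂ) (m : ℕ) : Reps := if m % 2 = 0 then (a, 0) else (0, a)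

def hmat (n : ℕ) (θ : ℝ) (a : ℕ → ℂ) : Matrix (Fin n) (Fin n) Reps :=
  fun i j =>
    if i = j then (Complex.exp (θ * I), 0)
    else if (i : ℕ) < (j : ℕ) then epsPow (a ((j : ℕ) - (i : ℕ))) ((j : ℕ) - (i : ℕ))
    else 0

def Hset (n : ℕ) : Set (Matrix (Fin n) (Fin n) Reps) :=
  {A | ∃ (θ : ℝ) (a : ℕ → ℂ), A = hmat n θ a}

/-- z represents a point of Y_{2j−1}: z_j ≠ 0 and z_k = 0 for k > j -/
def inY {n : ℕ} (j : Fin n) (z : Fin n → ℂ) : Prop :=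
  z j ≠ 0 ∧ ∀ k : Fin n, j < k → z k = 0

/-- helper: conjugate or not depending on parity -/
def cc (m : ℕ) (x : ℂ) : ℂ := if m % 2 = 0 then x else (starRingEnd ℂ) x

lemma cc_zero (m : ℕ) : cc m 0 = 0 := by unfold cc; split <;> simp

lemma cc_ne_zero {x : ℂ} (m : ℕ) (hx : x ≠ 0) : cc m x ≠ 0 := by
  unfold cc; split
  · exact hx
  · simpa using hx

lemma act_epsPow (a : ℂ) (m : ℕ) (x : ℂ) : act (epsPow a m) x = a * cc m x := by
  unfold act epsPow cc; split <;> simp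

/-- extension of a vector to ℕ -/
def zext {n : ℕ} (z : Fin n → ℂ) : ℕ → ℂ := fun k => if h : k < n then z ⟨k, h⟩ else 0

lemma zext_coe {n : ℕ} (z : Fin n → ℂ) (k : Fin n) : zext z (k : ℕ) = z k := by
  simp [zext]

lemma zext_eq_zero_of_gt {n : ℕ} {j : Fin n} {z : Fin n → ℂ} (hz : inY j z) {k : ℕ}
    (hk : (j : ℕ) < k) : zext z k = 0 := by
  unfold zext; split
  · exact hz.2 ⟨k, ‹_›⟩ (by simpa [Fin.lt_def] using hk)
  · rfl

lemma Mact_hmat {n : ℕ} (θ : ℝ) (a : ℕ → ℂ) (z : Fin n → ℂ) (i : Fin n) :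
    Mact (hmat n θ a) z i = Complex.exp (θ * I) * z i +
      ∑ k ∈ Finset.Ico ((i : ℕ) + 1) n, a (k - (i : ℕ)) * cc (k - (i : ℕ)) (zext z k) := by
  have h1 : ∀ k : Fin n, act (hmat n θ a i k) (z k) =
      (if i = k then Complex.exp (θ * I) * z k else 0) +
      (if (i : ℕ) < (k : ℕ) then a ((k : ℕ) - (i : ℕ)) * cc ((k : ℕ) - (i : ℕ)) (z k) else 0) := by
    intro k
    unfold hmat
    rcases eq_or_ne i k with h | h
    · subst h; simp [act]
    · rcases lt_or_ge (i : ℕ) (k : ℕ) with hlt | hle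
      · simp only [if_neg h, if_pos hlt, act_epsPow, zero_add]
      · have : ¬ (i : ℕ) < (k : ℕ) := not_lt.mpr hle
        simp [if_neg h, this, act]
  unfold Mact
  rw [Finset.sum_congr rfl fun k _ => h1 k, Finset.sum_add_distrib]
  congr 1
  · simp
  · have h2 : ∀ k : Fin n,
        (if (i : ℕ) < (k : ℕ) then a ((k : ℕ) - (i : ℕ)) * cc ((k : ℕ) - (i : ℕ)) (z k) else 0) =
        (fun p : ℕ => if (i : ℕ) < p then a (p - (i : ℕ)) * cc (p - (i : ℕ)) (zext z p) else 0) (k : ℕ) := by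
      intro k; simp [zext_coe]
    rw [Finset.sum_congr rfl fun k _ => h2 k]
    refine (Fin.sum_univ_eq_sum_range (fun p : ℕ => if (i : ℕ) < p then a (p - (i : ℕ)) * cc (p - (i : ℕ)) (zext z p) else 0) n).trans ?_
    rw [← Finset.sum_filter]
    congr 1
    ext p
    simp only [Finset.mem_filter, Finset.mem_range, Finset.mem_Ico]
    omega

noncomputable def aRec (jn : ℕ) (zz ww : ℕ → ℂ) (t E : ℂ) : ℕ → ℂ
  | m =>
    if h : 1 ≤ m ∧ m ≤ jn then
      (t * ww (jn - m) - E * zz (jn - m) -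
        ∑ k ∈ (Finset.Ico (jn - m + 1) jn).attach,
          aRec jn zz ww t E ((k : ℕ) - (jn - m)) * cc ((k : ℕ) - (jn - m)) (zz k)) /
        cc m (zz jn)
    else 0
  termination_by m => m
  decreasing_by
    have hk := Finset.mem_Ico.mp k.2
    omega

lemma aRec_spec (jn : ℕ) (zz ww : ℕ → ℂ) (t E : ℂ) (hzj : zz jn ≠ 0) (m : ℕ)
    (h1 : 1 ≤ m) (h2 : m ≤ jn) :
    aRec jn zz ww t E m * cc m (zz jn) =
      t * ww (jn - m) - E * zz (jn - m) -
        ∑ k ∈ Finset.Ico (jn - m + 1) jn,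
          aRec jn zz ww t E (k - (jn - m)) * cc (k - (jn - m)) (zz k) := by
  conv_lhs => rw [aRec]
  rw [dif_pos ⟨h1, h2⟩, div_mul_cancel₀ _ (cc_ne_zero m hzj)]
  congr 1
  rw [← Finset.sum_attach (Finset.Ico (jn - m + 1) jn)
    (fun k => aRec jn zz ww t E (k - (jn - m)) * cc (k - (jn - m)) (zz k))]

lemma orbit_of_inY {n : ℕ} (j : Fin n) (z w : Fin n → ℂ) (hz : inY j z) (hw : inY j w) :
    ∃ A ∈ Hset n, ∃ t : ℝ, t ≠ 0 ∧ Mact A z = t • w := by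
  have hzj := hz.1
  have hwj := hw.1
  set t : ℝ := ‖z j‖ / ‖w j‖ with ht
  have htpos : 0 < t := div_pos (norm_pos_iff.mpr hzj) (norm_pos_iff.mpr hwj)
  set u : ℂ := (t : ℂ) * w j / z j with hu
  have habs : ‖u‖ = 1 := by
    rw [hu, norm_div, norm_mul, Complex.norm_real, Real.norm_eq_abs, abs_of_pos htpos, ht]
    field_simp
  have hE : Complex.exp ((Complex.arg u : ℝ) * I) = u := by
    have h := Complex.norm_mul_exp_arg_mul_I u
    rw [habs] at h; simpa using h
  set E := Complex.exp ((Complex.arg u : ℝ) * I) with hEdef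
  have hEz : E * z j = (t : ℂ) * w j := by
    rw [hE, hu, div_mul_cancel₀ _ hzj]
  set a := aRec (j : ℕ) (zext z) (zext w) (t : ℂ) E with ha
  refine ⟨hmat n (Complex.arg u) a, ⟨_, _, rfl⟩, t, ne_of_gt htpos, ?_⟩
  funext i
  rw [Mact_hmat]
  simp only [Pi.smul_apply, Complex.real_smul]
  rcases lt_trichotomy ((j : ℕ)) ((i : ℕ)) with hij | hij | hij
  · have hzi : z i = 0 := hz.2 i (Fin.lt_def.mpr hij)
    have hwi : w i = 0 := hw.2 i (Fin.lt_def.mpr hij)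
    rw [hzi, hwi, mul_zero, mul_zero, zero_add]
    exact Finset.sum_eq_zero fun k hk => by
      rw [zext_eq_zero_of_gt hz (lt_trans hij (lt_of_lt_of_le (Nat.lt_succ_self _)
        (Finset.mem_Ico.mp hk).1)), cc_zero, mul_zero]
  · have hij' : i = j := Fin.ext hij.symm
    subst hij'
    rw [Finset.sum_eq_zero fun k hk => by
      rw [zext_eq_zero_of_gt hz (lt_of_lt_of_le (Nat.lt_succ_self _)
        (Finset.mem_Ico.mp hk).1), cc_zero, mul_zero], add_zero]
    exact hEz
  · set m : ℕ := (j : ℕ) - (i : ℕ) with hm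
    have h1 : 1 ≤ m := by omega
    have h2 : m ≤ (j : ℕ) := by omega
    have hspec := aRec_spec (j : ℕ) (zext z) (zext w) (t : ℂ) E
      (by rwa [zext_coe]) m h1 h2
    have him : (j : ℕ) - m = (i : ℕ) := by omega
    rw [him] at hspec
    have hsplit : (∑ k ∈ Finset.Ico ((i : ℕ) + 1) n,
          a (k - (i : ℕ)) * cc (k - (i : ℕ)) (zext z k))
        = (∑ k ∈ Finset.Ico ((i : ℕ) + 1) (j : ℕ),
            a (k - (i : ℕ)) * cc (k - (i : ℕ)) (zext z k)) + a m * cc m (zext z (j : ℕ)) := by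
      rw [← Finset.sum_Ico_succ_top (by omega : (i : ℕ) + 1 ≤ (j : ℕ))]
      have hmm : (j : ℕ) - m = (i : ℕ) := him
      rw [show (j : ℕ) - (i : ℕ) = m from rfl] at *
      refine (Finset.sum_subset (Finset.Ico_subset_Ico_right j.isLt) ?_).symm
      intro x hx hx'
      simp only [Finset.mem_Ico] at hx hx'
      rw [zext_eq_zero_of_gt hz (by omega), cc_zero, mul_zero]
    rw [hsplit, hspec, zext_coe, zext_coe]
    ring

lemma inY_of_orbit {n : ℕ} (z w : Fin n → ℂ) (hz : z ≠ 0) (θ : ℝ) (a : ℕ → ℂ) (t : ℝ)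
    (ht : t ≠ 0) (hM : Mact (hmat n θ a) z = t • w) :
    ∃ j : Fin n, inY j z ∧ inY j w := by
  obtain ⟨i0, hi0⟩ := Function.ne_iff.mp hz
  set S : Finset (Fin n) := Finset.univ.filter fun k => z k ≠ 0 with hS
  have hSne : S.Nonempty := ⟨i0, Finset.mem_filter.mpr ⟨Finset.mem_univ _, hi0⟩⟩
  set j := S.max' hSne with hj
  have hzj : z j ≠ 0 := (Finset.mem_filter.mp (S.max'_mem hSne)).2
  have hztop : ∀ k : Fin n, j < k → z k = 0 := by
    intro k hk
    by_contra h
    exact absurd (S.le_max' k (Finset.mem_filter.mpr ⟨Finset.mem_univ _, h⟩))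
      (not_le.mpr hk)
  have hinYz : inY j z := ⟨hzj, hztop⟩
  have hMi : ∀ i : Fin n, (j : ℕ) ≤ (i : ℕ) →
      Mact (hmat n θ a) z i = Complex.exp (θ * I) * z i := by
    intro i hi
    rw [Mact_hmat, Finset.sum_eq_zero, add_zero]
    intro k hk
    rw [zext_eq_zero_of_gt hinYz
      (lt_of_le_of_lt hi (lt_of_lt_of_le (Nat.lt_succ_self _) (Finset.mem_Ico.mp hk).1)),
      cc_zero, mul_zero]
  have htC : (t : ℂ) ≠ 0 := by exact_mod_cast ht
  refine ⟨j, hinYz, ?_, ?_⟩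
  · have h := congrFun hM j
    rw [hMi j le_rfl] at h
    simp only [Pi.smul_apply, Complex.real_smul] at h
    intro hw0
    rw [hw0, mul_zero] at h
    exact mul_ne_zero (Complex.exp_ne_zero _) hzj h
  · intro k hk
    have h := congrFun hM k
    rw [hMi k (le_of_lt (Fin.lt_def.mp hk)), hztop k hk, mul_zero] at h
    simp only [Pi.smul_apply, Complex.real_smul] at h
    exact (mul_eq_zero.mp h.symm).resolve_left htC

/-- The H-orbits on X = (ℂⁿ∖{0})/ℝ^× are exactly the n sets Y₁, Y₃, …, Y_{2n−1}:
two nonzero vectors lie in the same H-orbit modulo ℝ^× iff they lie in a common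
Y_{2j−1}, and each Y_{2j−1} is nonempty; in particular there are exactly n orbits. -/
theorem stmt12 (n : ℕ) :
    (∀ z w : Fin n → ℂ, z ≠ 0 → w ≠ 0 →
      ((∃ A ∈ Hset n, ∃ t : ℝ, t ≠ 0 ∧ Mact A z = t • w) ↔
        ∃ j : Fin n, inY j z ∧ inY j w)) ∧
    (∀ j : Fin n, ∃ z : Fin n → ℂ, inY j z) := by
  constructor
  · intro z w hz hw
    constructor
    · rintro ⟨A, ⟨θ, a, rfl⟩, t, ht, hM⟩
      exact inY_of_orbit z w hz θ a t ht hM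
    · rintro ⟨j, hjz, hjw⟩
      exact orbit_of_inY j z w hjz hjw
  · intro j
    refine ⟨fun k => if k = j then 1 else 0, by simp, fun k hk => ?_⟩
    simp [ne_of_gt hk]
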